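/- In the multiplicative binomial (CRR) market model on {0,...,T} with deterministic interest rate r, up factor 1+b, down factor 1+a (−1 < a < r < b), up probability p ∈ (0,1), the optimal terminal discounted wealth for logarithmic utility from initial capital x > 0 is V̂_t = x · (dP/dP̂)|F_t, where P̂ is the unique risk-neutral measure with up probability (r−a)/(b−a); i.e. sup over self-financing strategies with initial wealth x and positive wealth of E[log(V̄_t(ψ))] is attained at the wealth process x · L_t^{-1} with L_t = (dP̂/dP)|F_t, and equals log x + D(P‖P̂)|F_t (the relative entropy of P with respect to P̂ restricted to F_t). -/

import Mathlib

open MeasureTheory ProbabilityTheory Set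

namespace Stmt13Aux

lemma factor {n : ℕ} {f : (ℕ → Bool) → ℝ}
    (hf : Measurable[MeasurableSpace.comap
      (fun (ω : ℕ → Bool) (i : Fin n) => ω (i : ℕ)) MeasurableSpace.pi] f) :
    ∃ g : (Fin n → Bool) → ℝ, f = fun ω => g (fun i => ω (i : ℕ)) := by
  classical
  set π : (ℕ → Bool) → (Fin n → Bool) := fun ω i => ω (i : ℕ) with hπ
  have key : ∀ ω ω' : ℕ → Bool, π ω = π ω' → f ω = f ω' := by
    intro ω ω' h
    have hms : MeasurableSet[MeasurableSpace.comap π MeasurableSpace.pi] (f ⁻¹' {f ω}) :=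
      hf (measurableSet_singleton _)
    obtain ⟨A, -, hpre⟩ := hms
    have hω : ω ∈ π ⁻¹' A := by rw [hpre]; exact rfl
    have hω' : ω' ∈ π ⁻¹' A := by
      simp only [Set.mem_preimage] at hω ⊢
      rwa [← h]
    rw [hpre] at hω'
    exact hω'.symm
  refine ⟨fun u => f (fun s => if h : s < n then u ⟨s, h⟩ else false), ?_⟩
  funext ω
  apply key
  funext i
  simp [π, i.isLt]

lemma integrable_of_fin {μ : Measure (ℕ → Bool)} [IsProbabilityMeasure μ] {n : ℕ}
    {f : (ℕ → Bool) → ℝ} (hmeas : Measurable f) (g : (Fin n → Bool) → ℝ)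
    (hfg : f = fun ω => g (fun i => ω (i : ℕ))) : Integrable f μ := by
  classical
  obtain ⟨u0, hu0⟩ := Finite.exists_max fun u : Fin n → Bool => |g u|
  refine (integrable_const |g u0|).mono' hmeas.aestronglyMeasurable
    (ae_of_all _ fun ω => ?_)
  rw [hfg]
  simp only [Real.norm_eq_abs]
  exact hu0 _

lemma integral_coord {μ : Measure (ℕ → Bool)} [IsProbabilityMeasure μ] {p : ℝ}
    (hp0 : 0 ≤ p) (hmarg : ∀ s, μ {ω | ω s = true} = ENNReal.ofReal p) (n : ℕ) (c : Bool → ℝ) :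
    ∫ ω, c (ω n) ∂μ = p * c true + (1 - p) * c false := by
  have hsm : MeasurableSet {ω : ℕ → Bool | ω n = true} := by
    have he : {ω : ℕ → Bool | ω n = true} = (fun ω : ℕ → Bool => ω n) ⁻¹' {true} := by
      ext ω; simp
    rw [he]
    exact measurable_pi_apply n (measurableSet_singleton true)
  have hfun : (fun ω : ℕ → Bool => c (ω n)) = fun ω =>
      Set.indicator {ω : ℕ → Bool | ω n = true} (fun _ => c true - c false) ω + c false := by
    funext ω
    by_cases h : ω n = true
    · rw [h]
      simp [Set.indicator_apply, Set.mem_setOf_eq, h]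
    · have hf : ω n = false := by simpa using h
      rw [hf]
      simp [Set.indicator_apply, Set.mem_setOf_eq, h]
  rw [hfun, integral_add ((integrable_const _).indicator hsm) (integrable_const _),
    integral_indicator_const _ hsm, measureReal_def, hmarg n, integral_const]
  simp only [probReal_univ, ENNReal.toReal_one, one_smul, smul_eq_mul,
    ENNReal.toReal_ofReal hp0]
  ring

end Stmt13Aux

set_option maxHeartbeats 1000000 in
/-- Optimal logarithmic utility in the CRR model: the supremum of `E[log V̄_t(ψ)]` over
self-financing strategies with initial capital `x` and positive wealth equals
`log x + D(P‖P̂)|F_t = log x + E[log (L_t)⁻¹]`, and is attained at the wealth process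
`x · (dP/dP̂)|F_t = x · L_t⁻¹`, where `P̂` has up-probability `(r−a)/(b−a)`. -/
theorem stmt13 (μ : Measure (ℕ → Bool)) [IsProbabilityMeasure μ]
    (T t : ℕ) (ht : t ≤ T)
    (a b r p S0 x : ℝ) (ha : -1 < a) (har : a < r) (hrb : r < b)
    (hp : p ∈ Set.Ioo (0 : ℝ) 1) (hS0 : 0 < S0) (hx : 0 < x)
    (hindep : iIndepFun
      (fun s ω => ω s) μ)
    (hmarg : ∀ s, μ {ω | ω s = true} = ENNReal.ofReal p)
    (ℱ : Filtration ℕ (MeasurableSpace.pi))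
    (hℱ : ∀ n, (ℱ n : MeasurableSpace (ℕ → Bool)) =
      ⨆ s < n, MeasurableSpace.comap (fun ω => ω s) inferInstance)
    (Stil : ℕ → (ℕ → Bool) → ℝ)
    (hS : ∀ n ω, Stil n ω = S0 * ∏ s ∈ Finset.range n, (1 + (if ω s then b else a)) / (1 + r))
    (qhat : ℝ) (hqhat : qhat = (r - a) / (b - a))
    (L : ℕ → (ℕ → Bool) → ℝ)
    (hL : ∀ n ω, L n ω = ∏ s ∈ Finset.range n,
      (if ω s then qhat / p else (1 - qhat) / (1 - p)))
    (V : (ℕ → (ℕ → Bool) → ℝ) → ℕ → (ℕ → Bool) → ℝ)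
    (hV : ∀ φ n ω, V φ n ω = x + ∑ s ∈ Finset.range n, φ s ω * (Stil (s+1) ω - Stil s ω)) :
    IsGreatest {y : ℝ | ∃ φ : ℕ → (ℕ → Bool) → ℝ,
        (∀ s, StronglyMeasurable[ℱ s] (φ s)) ∧
        (∀ n ≤ t, ∀ ω, 0 < V φ n ω) ∧
        y = ∫ ω, Real.log (V φ t ω) ∂μ}
      (Real.log x + ∫ ω, Real.log (L t ω)⁻¹ ∂μ) ∧
    ∃ φ : ℕ → (ℕ → Bool) → ℝ,
      (∀ s, StronglyMeasurable[ℱ s] (φ s)) ∧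
      (∀ n ≤ t, ∀ ω, 0 < V φ n ω) ∧
      (fun ω => V φ t ω) =ᵐ[μ] fun ω => x * (L t ω)⁻¹ := by
  classical
  obtain ⟨hp0, hp1⟩ := hp
  have hp1' : (0:ℝ) < 1 - p := by linarith
  have hba : (0:ℝ) < b - a := by linarith
  have hq0 : 0 < qhat := by rw [hqhat]; exact div_pos (by linarith) hba
  have hq1 : qhat < 1 := by rw [hqhat, div_lt_one hba]; linarith
  have hq1' : (0:ℝ) < 1 - qhat := by linarith
  have hr1 : (0:ℝ) < 1 + r := by linarith
  have ha1 : (0:ℝ) < 1 + a := by linarith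
  have hb1 : (0:ℝ) < 1 + b := by linarith
  have hbr : (0:ℝ) < b - r := by linarith
  have hpne : p ≠ 0 := ne_of_gt hp0
  have hp1ne : (1:ℝ) - p ≠ 0 := ne_of_gt hp1'
  have hqne : qhat ≠ 0 := ne_of_gt hq0
  have hq1ne : (1:ℝ) - qhat ≠ 0 := ne_of_gt hq1'
  have hr1ne : (1:ℝ) + r ≠ 0 := ne_of_gt hr1
  have hbane : b - a ≠ 0 := ne_of_gt hba
  have hbrne : b - r ≠ 0 := ne_of_gt hbr
  -- positivity of L and Stil
  have hLpos : ∀ n ω, 0 < L n ω := by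
    intro n ω
    rw [hL]
    refine Finset.prod_pos fun s _ => ?_
    cases hωs : ω s
    · simpa [hωs] using div_pos hq1' hp1'
    · simpa [hωs] using div_pos hq0 hp0
  have hSpos : ∀ n ω, 0 < Stil n ω := by
    intro n ω
    rw [hS]
    refine mul_pos hS0 (Finset.prod_pos fun s _ => ?_)
    cases hωs : ω s
    · simpa [hωs] using div_pos ha1 hr1
    · simpa [hωs] using div_pos hb1 hr1
  -- filtration measurability facts
  have hcomap_le : ∀ u n : ℕ, u < n →
      (MeasurableSpace.comap (fun ω : ℕ → Bool => ω u) inferInstance) ≤ ℱ n := by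
    intro u n hun
    rw [hℱ n]
    exact le_iSup_of_le u (le_iSup_of_le hun le_rfl)
  have heval : ∀ u n : ℕ, u < n → Measurable[ℱ n] (fun ω : ℕ → Bool => ω u) :=
    fun u n hun => Measurable.of_comap_le (hcomap_le u n hun)
  have hcoordfn : ∀ (u n : ℕ), u < n → ∀ c : Bool → ℝ,
      Measurable[ℱ n] (fun ω => c (ω u)) :=
    fun u n hun c => (measurable_of_countable c).comp (heval u n hun)
  have hfle : ∀ n, (ℱ n : MeasurableSpace (ℕ → Bool)) ≤
      MeasurableSpace.comap (fun (ω : ℕ → Bool) (i : Fin n) => ω (i : ℕ))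
        MeasurableSpace.pi := by
    intro n
    rw [hℱ n]
    refine iSup₂_le fun s hs => ?_
    have h1 : (fun ω : ℕ → Bool => ω s) =
        (fun u : Fin n → Bool => u ⟨s, hs⟩) ∘ (fun (ω : ℕ → Bool) (i : Fin n) => ω (i : ℕ)) :=
      rfl
    rw [h1, ← MeasurableSpace.comap_comp]
    exact MeasurableSpace.comap_mono (measurable_pi_apply _).comap_le
  -- integrability of ℱ n-measurable functions
  have hInt : ∀ (n : ℕ) (f : (ℕ → Bool) → ℝ), Measurable[ℱ n] f → Integrable f μ := by
    intro n f hf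
    obtain ⟨g, hg⟩ := Stmt13Aux.factor (hf.mono (hfle n) le_rfl)
    exact Stmt13Aux.integrable_of_fin (hf.mono (ℱ.le n) le_rfl) g hg
  -- product of an ℱ n-measurable function with a function of ω n
  have hmul : ∀ (n : ℕ) (f : (ℕ → Bool) → ℝ), Measurable[ℱ n] f → ∀ c : Bool → ℝ,
      ∫ ω, f ω * c (ω n) ∂μ = (∫ ω, f ω ∂μ) * (p * c true + (1 - p) * c false) := by
    intro n f hf c
    obtain ⟨g, hg⟩ := Stmt13Aux.factor (hf.mono (hfle n) le_rfl)
    have hdis : Disjoint (Finset.range n) ({n} : Finset ℕ) := by simp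
    have hST := hindep.indepFun_finset (Finset.range n) {n} hdis fun i => measurable_pi_apply i
    set g2 : (↥(Finset.range n) → Bool) → ℝ :=
      fun u => g (fun i => u ⟨(i : ℕ), Finset.mem_range.mpr i.isLt⟩) with hg2
    set c2 : (↥({n} : Finset ℕ) → Bool) → ℝ :=
      fun u => c (u ⟨n, Finset.mem_singleton_self n⟩) with hc2
    have hIF : IndepFun f (fun ω => c (ω n)) μ := by
      have h := hST.comp (φ := g2) (ψ := c2) (measurable_of_countable _)
        (measurable_of_countable _)
      have e1 : (g2 ∘ fun (ω : ℕ → Bool) (i : ↥(Finset.range n)) => ω (i : ℕ)) = f := by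
        rw [hg]; rfl
      have e2 : (c2 ∘ fun (ω : ℕ → Bool) (i : ↥({n} : Finset ℕ)) => ω (i : ℕ)) =
          fun ω => c (ω n) := rfl
      rwa [e1, e2] at h
    have hmf : Measurable f := hf.mono (ℱ.le n) le_rfl
    have hmc : Measurable (fun ω : ℕ → Bool => c (ω n)) :=
      (measurable_of_countable c).comp (measurable_pi_apply n)
    have h := hIF.integral_fun_mul_eq_mul_integral hmf.aestronglyMeasurable hmc.aestronglyMeasurable
    have hpm : (∫ ω, f ω * c (ω n) ∂μ) = (∫ ω, f ω ∂μ) * ∫ ω, c (ω n) ∂μ := h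
    rw [hpm, Stmt13Aux.integral_coord hp0.le hmarg n c]
  -- measurability of Stil, L, V
  have hmeasStil : ∀ n m : ℕ, n ≤ m → Measurable[ℱ m] (Stil n) := by
    intro n m hnm
    have he : Stil n = fun ω =>
        S0 * ∏ s ∈ Finset.range n, (1 + (if ω s then b else a)) / (1 + r) :=
      funext (hS n)
    rw [he]
    refine Measurable.const_mul (Finset.measurable_prod _ fun s hs => ?_) S0
    exact hcoordfn s m (lt_of_lt_of_le (Finset.mem_range.mp hs) hnm)
      (fun v => (1 + (if v then b else a)) / (1 + r))
  have hmeasL : ∀ n m : ℕ, n ≤ m → Measurable[ℱ m] (L n) := by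
    intro n m hnm
    have he : L n = fun ω =>
        ∏ s ∈ Finset.range n, (if ω s then qhat / p else (1 - qhat) / (1 - p)) :=
      funext (hL n)
    rw [he]
    refine Finset.measurable_prod _ fun s hs => ?_
    exact hcoordfn s m (lt_of_lt_of_le (Finset.mem_range.mp hs) hnm)
      (fun v => if v then qhat / p else (1 - qhat) / (1 - p))
  have hmeasV : ∀ (φ : ℕ → (ℕ → Bool) → ℝ), (∀ s, Measurable[ℱ s] (φ s)) →
      ∀ n m : ℕ, n ≤ m → Measurable[ℱ m] (V φ n) := by
    intro φ hφ n m hnm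
    have he : V φ n = fun ω =>
        x + ∑ s ∈ Finset.range n, φ s ω * (Stil (s+1) ω - Stil s ω) := funext (hV φ n)
    rw [he]
    refine Measurable.const_add (Finset.measurable_sum _ fun s hs => ?_) x
    have hsm : s < n := Finset.mem_range.mp hs
    exact ((hφ s).mono (ℱ.mono (le_trans hsm.le hnm)) le_rfl).mul
      ((hmeasStil (s+1) m (le_trans hsm hnm)).sub (hmeasStil s m (le_trans hsm.le hnm)))
  -- martingale property
  have hmart : ∀ (φ : ℕ → (ℕ → Bool) → ℝ), (∀ s, Measurable[ℱ s] (φ s)) →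
      ∀ n : ℕ, ∫ ω, V φ n ω * L n ω ∂μ = x := by
    intro φ hφ n
    induction n with
    | zero =>
      have he : (fun ω : ℕ → Bool => V φ 0 ω * L 0 ω) = fun _ => x := by
        funext ω; rw [hV, hL]; simp
      rw [he, integral_const]; simp
    | succ n ih =>
      set c1 : Bool → ℝ := fun v => (if v then qhat / p else (1 - qhat) / (1 - p)) - 1 with hc1
      set c2 : Bool → ℝ := fun v =>
        ((if v then b else a) - r) / (1 + r) * (if v then qhat / p else (1 - qhat) / (1 - p))
        with hc2
      have hkey : ∀ ω, V φ (n+1) ω * L (n+1) ω =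
          V φ n ω * L n ω + ((V φ n ω * L n ω) * c1 (ω n)
            + (φ n ω * L n ω * Stil n ω) * c2 (ω n)) := by
        intro ω
        have hLs : L (n+1) ω = L n ω * (if ω n then qhat / p else (1 - qhat) / (1 - p)) := by
          rw [hL, hL, Finset.prod_range_succ]
        have hSs : Stil (n+1) ω = Stil n ω * ((1 + (if ω n then b else a)) / (1 + r)) := by
          rw [hS, hS, Finset.prod_range_succ, mul_assoc]
        have hVs : V φ (n+1) ω = V φ n ω + φ n ω * (Stil (n+1) ω - Stil n ω) := by
          rw [hV, hV, Finset.sum_range_succ, add_assoc]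
        rw [hVs, hSs, hLs, hc1, hc2]
        cases hωn : ω n
        · simp only [Bool.false_eq_true, if_false]
          field_simp
          ring
        · simp only [if_true]
          field_simp
          ring
      have hA : Measurable[ℱ n] (fun ω => V φ n ω * L n ω) :=
        (hmeasV φ hφ n n le_rfl).mul (hmeasL n n le_rfl)
      have hB : Measurable[ℱ n] (fun ω => φ n ω * L n ω * Stil n ω) :=
        ((hφ n).mul (hmeasL n n le_rfl)).mul (hmeasStil n n le_rfl)
      have hA1 : Measurable[ℱ (n+1)] (fun ω => (V φ n ω * L n ω) * c1 (ω n)) :=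
        (hA.mono (ℱ.mono n.le_succ) le_rfl).mul (hcoordfn n (n+1) n.lt_succ_self c1)
      have hB1 : Measurable[ℱ (n+1)] (fun ω => (φ n ω * L n ω * Stil n ω) * c2 (ω n)) :=
        (hB.mono (ℱ.mono n.le_succ) le_rfl).mul (hcoordfn n (n+1) n.lt_succ_self c2)
      have h1 : (∫ ω, (V φ n ω * L n ω) * c1 (ω n) ∂μ)
          = (∫ ω, V φ n ω * L n ω ∂μ) * (p * c1 true + (1 - p) * c1 false) :=
        hmul n _ hA c1
      have h2 : (∫ ω, (φ n ω * L n ω * Stil n ω) * c2 (ω n) ∂μ)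
          = (∫ ω, φ n ω * L n ω * Stil n ω ∂μ) * (p * c2 true + (1 - p) * c2 false) :=
        hmul n _ hB c2
      have e1 : p * c1 true + (1 - p) * c1 false = 0 := by
        show p * (qhat / p - 1) + (1 - p) * ((1 - qhat) / (1 - p) - 1) = 0
        field_simp
        ring
      have e2 : p * c2 true + (1 - p) * c2 false = 0 := by
        show p * ((b - r) / (1 + r) * (qhat / p))
          + (1 - p) * ((a - r) / (1 + r) * ((1 - qhat) / (1 - p))) = 0
        rw [hqhat]
        field_simp
        ring
      rw [e1, mul_zero] at h1
      rw [e2, mul_zero] at h2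
      have heq : (fun ω => V φ (n+1) ω * L (n+1) ω) = fun ω =>
          V φ n ω * L n ω + ((V φ n ω * L n ω) * c1 (ω n)
            + (φ n ω * L n ω * Stil n ω) * c2 (ω n)) := funext hkey
      have hadd1 : ∫ ω, (V φ n ω * L n ω + ((V φ n ω * L n ω) * c1 (ω n)
            + (φ n ω * L n ω * Stil n ω) * c2 (ω n))) ∂μ
          = (∫ ω, V φ n ω * L n ω ∂μ)
            + ∫ ω, ((V φ n ω * L n ω) * c1 (ω n)
              + (φ n ω * L n ω * Stil n ω) * c2 (ω n)) ∂μ :=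
        integral_add (hInt n _ hA) ((hInt (n+1) _ hA1).add (hInt (n+1) _ hB1))
      have hadd2 : ∫ ω, ((V φ n ω * L n ω) * c1 (ω n)
              + (φ n ω * L n ω * Stil n ω) * c2 (ω n)) ∂μ
          = (∫ ω, (V φ n ω * L n ω) * c1 (ω n) ∂μ)
            + ∫ ω, (φ n ω * L n ω * Stil n ω) * c2 (ω n) ∂μ :=
        integral_add (hInt (n+1) _ hA1) (hInt (n+1) _ hB1)
      rw [heq, hadd1, hadd2, h1, h2, ih]
      ring
  -- the optimal strategy
  set φhat : ℕ → (ℕ → Bool) → ℝ :=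
    fun s ω => (x * (p / qhat - 1) * (1 + r) / (b - r)) * (L s ω)⁻¹ * (Stil s ω)⁻¹ with hφhat
  have hφhatmeas : ∀ s, Measurable[ℱ s] (φhat s) := fun s =>
    (measurable_const.mul (hmeasL s s le_rfl).inv).mul (hmeasStil s s le_rfl).inv
  have hVhat : ∀ n ω, V φhat n ω = x * (L n ω)⁻¹ := by
    intro n ω
    induction n with
    | zero => rw [hV, hL]; simp
    | succ n ihn =>
      have hVs : V φhat (n+1) ω = V φhat n ω + φhat n ω * (Stil (n+1) ω - Stil n ω) := by
        rw [hV, hV, Finset.sum_range_succ, add_assoc]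
      have hLs : L (n+1) ω = L n ω * (if ω n then qhat / p else (1 - qhat) / (1 - p)) := by
        rw [hL, hL, Finset.prod_range_succ]
      have hSs : Stil (n+1) ω = Stil n ω * ((1 + (if ω n then b else a)) / (1 + r)) := by
        rw [hS, hS, Finset.prod_range_succ, mul_assoc]
      have hLn : L n ω ≠ 0 := (hLpos n ω).ne'
      have hSn : Stil n ω ≠ 0 := (hSpos n ω).ne'
      have hkeyq : (a - r) * (1 - qhat) + qhat * (b - r) = 0 := by
        rw [hqhat]; field_simp; ring
      rw [hVs, ihn, hSs, hLs, hφhat]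
      cases hωn : ω n
      · simp only [Bool.false_eq_true, if_false]
        field_simp
        rw [hqhat]; field_simp [show r - a ≠ 0 by linarith]; ring
      · simp only [if_true]
        field_simp
        ring
  have hVhatpos : ∀ n, n ≤ t → ∀ ω, 0 < V φhat n ω := by
    intro n _ ω
    rw [hVhat]
    exact mul_pos hx (inv_pos.mpr (hLpos n ω))
  -- integrability of log L t ⁻¹
  have hlogL_meas : Measurable[ℱ t] (fun ω => Real.log (L t ω)⁻¹) :=
    Real.measurable_log.comp (hmeasL t t le_rfl).inv
  have hlogL_int : Integrable (fun ω => Real.log (L t ω)⁻¹) μ := hInt t _ hlogL_meas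
  have hval : ∫ ω, Real.log (V φhat t ω) ∂μ
      = Real.log x + ∫ ω, Real.log (L t ω)⁻¹ ∂μ := by
    have he : (fun ω => Real.log (V φhat t ω))
        = fun ω => Real.log x + Real.log (L t ω)⁻¹ := by
      funext ω
      rw [hVhat t ω, Real.log_mul hx.ne' (inv_ne_zero (hLpos t ω).ne')]
    rw [he, integral_add (integrable_const _) hlogL_int, integral_const]
    simp [measure_univ]
  refine ⟨⟨⟨φhat, fun s => (hφhatmeas s).stronglyMeasurable, hVhatpos, hval.symm⟩, ?_⟩,
    ⟨φhat, fun s => (hφhatmeas s).stronglyMeasurable, hVhatpos,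
      Filter.Eventually.of_forall fun ω => hVhat t ω⟩⟩
  rintro y ⟨φ, hφm, hφpos, rfl⟩
  have hφmeas : ∀ s, Measurable[ℱ s] (φ s) := fun s => (hφm s).measurable
  have hVt : Measurable[ℱ t] (V φ t) := hmeasV φ hφmeas t t le_rfl
  have hLt : Measurable[ℱ t] (L t) := hmeasL t t le_rfl
  have hlogV : Measurable[ℱ t] (fun ω => Real.log (V φ t ω)) :=
    Real.measurable_log.comp hVt
  have hVLmeas : Measurable[ℱ t] (fun ω => V φ t ω * L t ω / x) :=
    (hVt.mul hLt).div_const x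
  have hRHSmeas : Measurable[ℱ t]
      (fun ω => Real.log x + Real.log (L t ω)⁻¹ + (V φ t ω * L t ω / x - 1)) :=
    (measurable_const.add (Real.measurable_log.comp hLt.inv)).add
      (hVLmeas.sub measurable_const)
  have hpt : ∀ ω, Real.log (V φ t ω)
      ≤ Real.log x + Real.log (L t ω)⁻¹ + (V φ t ω * L t ω / x - 1) := by
    intro ω
    have h1 : 0 < V φ t ω := hφpos t le_rfl ω
    have h2 : 0 < L t ω := hLpos t ω
    have h3 : 0 < V φ t ω * L t ω / x := div_pos (mul_pos h1 h2) hx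
    have h4 := Real.log_le_sub_one_of_pos h3
    have h5 : Real.log (V φ t ω * L t ω / x)
        = Real.log (V φ t ω) + Real.log (L t ω) - Real.log x := by
      rw [Real.log_div (mul_pos h1 h2).ne' hx.ne', Real.log_mul h1.ne' h2.ne']
    have h6 : Real.log (L t ω)⁻¹ = - Real.log (L t ω) := Real.log_inv _
    linarith
  have hIle := integral_mono (hInt t _ hlogV) (hInt t _ hRHSmeas) hpt
  have hVLint : ∫ ω, V φ t ω * L t ω ∂μ = x := hmart φ hφmeas t
  have hI2 : ∫ ω, (V φ t ω * L t ω / x - 1) ∂μ = 0 := by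
    have hd : Integrable (fun ω => V φ t ω * L t ω / x) μ := hInt t _ hVLmeas
    rw [integral_sub hd (integrable_const 1), integral_const, integral_div, hVLint]
    simp [measure_univ, div_self hx.ne']
  have hRHS : ∫ ω, (Real.log x + Real.log (L t ω)⁻¹ + (V φ t ω * L t ω / x - 1)) ∂μ
      = Real.log x + ∫ ω, Real.log (L t ω)⁻¹ ∂μ := by
    have hint1 : Integrable (fun ω => Real.log x + Real.log (L t ω)⁻¹) μ :=
      (integrable_const _).add hlogL_int
    have hadd : ∫ ω, (Real.log x + Real.log (L t ω)⁻¹ + (V φ t ω * L t ω / x - 1)) ∂μ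
        = (∫ ω, (Real.log x + Real.log (L t ω)⁻¹) ∂μ)
          + ∫ ω, (V φ t ω * L t ω / x - 1) ∂μ :=
      integral_add hint1 (hInt t _ (hVLmeas.sub measurable_const))
    rw [hadd, hI2, integral_add (integrable_const _) hlogL_int, integral_const]
    simp [measure_univ]
  rw [hRHS] at hIle
  exact hIle
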